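/- (Finite-dimensional Larson–Sweedler theorem, cointegral version.) Let A be a finite-dimensional associative unital algebra over ℂ with a comultiplication Δ. If there exists a faithful left cointegral h in A, then the linear maps T₁, T₂ : A ⊗ A → A ⊗ A determined by T₁(a ⊗ b) = Δ(a)(1 ⊗ b) and T₂(a ⊗ b) = (a ⊗ 1)Δ(b) are bijective, and (A, Δ) is a Hopf algebra: there exist a linear map ε : A → ℂ and a linear map S : A → A such that (ε ⊗ id)(Δ(a)) = a, (id ⊗ ε)(Δ(a)) = a, m(S ⊗ id)(Δ(a)) = ε(a)·1 and m(id ⊗ S)(Δ(a)) = ε(a)·1 for all a ∈ A, where m denotes the multiplication map A ⊗ A → A. -/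

import Mathlib

open TensorProduct

noncomputable section

variable {A : Type*} [Ring A] [Algebra ℂ A]

/-- The slice map `id ⊗ ω : A ⊗ A → A`. -/
def sliceR (ω : A →ₗ[ℂ] ℂ) : A ⊗[ℂ] A →ₗ[ℂ] A :=
  (TensorProduct.rid ℂ A).toLinearMap ∘ₗ TensorProduct.map LinearMap.id ω

/-- The slice map `ω ⊗ id : A ⊗ A → A`. -/
def sliceL (ω : A →ₗ[ℂ] ℂ) : A ⊗[ℂ] A →ₗ[ℂ] A :=
  (TensorProduct.lid ℂ A).toLinearMap ∘ₗ TensorProduct.map ω LinearMap.id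

/-- Coassociativity of a comultiplication `Δ : A → A ⊗ A`:
`(Δ ⊗ id) ∘ Δ = (id ⊗ Δ) ∘ Δ` (up to the associator). -/
def IsCoassoc (Δ : A →ₐ[ℂ] A ⊗[ℂ] A) : Prop :=
  ∀ a : A,
    TensorProduct.assoc ℂ A A A (TensorProduct.map Δ.toLinearMap LinearMap.id (Δ a)) =
      TensorProduct.map LinearMap.id Δ.toLinearMap (Δ a)

/-- A left integral: a nonzero functional with `(id ⊗ φ)(Δ a) = φ(a)·1` for all `a`. -/
def IsLeftIntegral (Δ : A →ₐ[ℂ] A ⊗[ℂ] A) (φ : A →ₗ[ℂ] ℂ) : Prop :=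
  φ ≠ 0 ∧ ∀ a : A, sliceR φ (Δ a) = φ a • (1 : A)

/-- A right integral: a nonzero functional with `(ψ ⊗ id)(Δ a) = ψ(a)·1` for all `a`. -/
def IsRightIntegral (Δ : A →ₐ[ℂ] A ⊗[ℂ] A) (ψ : A →ₗ[ℂ] ℂ) : Prop :=
  ψ ≠ 0 ∧ ∀ a : A, sliceL ψ (Δ a) = ψ a • (1 : A)

/-- A faithful functional: the bilinear form `(a, b) ↦ ω(ab)` is non-degenerate. -/
def IsFaithful (ω : A →ₗ[ℂ] ℂ) : Prop :=
  (∀ b : A, (∀ a : A, ω (a * b) = 0) → b = 0) ∧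
  (∀ b : A, (∀ a : A, ω (b * a) = 0) → b = 0)

/-- The left leg of an element `x ∈ A ⊗ A`: the span of `{(id ⊗ ω)(x) : ω ∈ A*}`. -/
def leftLegOf (x : A ⊗[ℂ] A) : Submodule ℂ A :=
  Submodule.span ℂ {y : A | ∃ ω : A →ₗ[ℂ] ℂ, y = sliceR ω x}

/-- The right leg of an element `x ∈ A ⊗ A`: the span of `{(ω ⊗ id)(x) : ω ∈ A*}`. -/
def rightLegOf (x : A ⊗[ℂ] A) : Submodule ℂ A :=
  Submodule.span ℂ {y : A | ∃ ω : A →ₗ[ℂ] ℂ, y = sliceL ω x}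

/-- The left leg of `Δ`: the span of `{(id ⊗ ω)(Δ a) : a ∈ A, ω ∈ A*}`. -/
def leftLeg (Δ : A →ₐ[ℂ] A ⊗[ℂ] A) : Submodule ℂ A :=
  Submodule.span ℂ {y : A | ∃ (a : A) (ω : A →ₗ[ℂ] ℂ), y = sliceR ω (Δ a)}

/-- The right leg of `Δ`: the span of `{(ω ⊗ id)(Δ a) : a ∈ A, ω ∈ A*}`. -/
def rightLeg (Δ : A →ₐ[ℂ] A ⊗[ℂ] A) : Submodule ℂ A :=
  Submodule.span ℂ {y : A | ∃ (a : A) (ω : A →ₗ[ℂ] ℂ), y = sliceL ω (Δ a)}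

/-- A comultiplication is full if both of its legs are all of `A`. -/
def IsFull (Δ : A →ₐ[ℂ] A ⊗[ℂ] A) : Prop :=
  leftLeg Δ = ⊤ ∧ rightLeg Δ = ⊤

/-- The linear map `T₁` with `T₁ (a ⊗ b) = Δ(a) * (1 ⊗ b)`. -/
def T1 (Δ : A →ₐ[ℂ] A ⊗[ℂ] A) : A ⊗[ℂ] A →ₗ[ℂ] A ⊗[ℂ] A :=
  LinearMap.mul' ℂ (A ⊗[ℂ] A) ∘ₗ
    TensorProduct.map Δ.toLinearMap (TensorProduct.mk ℂ A A 1)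

/-- The linear map `T₁'` with `T₁' (a ⊗ b) = Δ(a) * (b ⊗ 1)`. -/
def T1' (Δ : A →ₐ[ℂ] A ⊗[ℂ] A) : A ⊗[ℂ] A →ₗ[ℂ] A ⊗[ℂ] A :=
  LinearMap.mul' ℂ (A ⊗[ℂ] A) ∘ₗ
    TensorProduct.map Δ.toLinearMap ((TensorProduct.mk ℂ A A).flip 1)

/-- The linear map `T₂` with `T₂ (a ⊗ b) = (a ⊗ 1) * Δ(b)`. -/
def T2 (Δ : A →ₐ[ℂ] A ⊗[ℂ] A) : A ⊗[ℂ] A →ₗ[ℂ] A ⊗[ℂ] A :=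
  LinearMap.mul' ℂ (A ⊗[ℂ] A) ∘ₗ
    TensorProduct.map ((TensorProduct.mk ℂ A A).flip 1) Δ.toLinearMap

/-- The linear map `T₂'` with `T₂' (a ⊗ b) = (1 ⊗ a) * Δ(b)`. -/
def T2' (Δ : A →ₐ[ℂ] A ⊗[ℂ] A) : A ⊗[ℂ] A →ₗ[ℂ] A ⊗[ℂ] A :=
  LinearMap.mul' ℂ (A ⊗[ℂ] A) ∘ₗ
    TensorProduct.map (TensorProduct.mk ℂ A A 1) Δ.toLinearMap

/-- A left cointegral: a nonzero element `h` with `Δ(a)(1 ⊗ h) = a ⊗ h` for all `a`. -/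
def IsLeftCointegral (Δ : A →ₐ[ℂ] A ⊗[ℂ] A) (h : A) : Prop :=
  h ≠ 0 ∧ ∀ a : A, Δ a * ((1 : A) ⊗ₜ[ℂ] h) = a ⊗ₜ[ℂ] h

/-- A right cointegral: a nonzero element `k` with `(k ⊗ 1)Δ(a) = k ⊗ a` for all `a`. -/
def IsRightCointegral (Δ : A →ₐ[ℂ] A ⊗[ℂ] A) (k : A) : Prop :=
  k ≠ 0 ∧ ∀ a : A, (k ⊗ₜ[ℂ] (1 : A)) * Δ a = k ⊗ₜ[ℂ] a

/-- `Δ₁₃(a) = (1 ⊗ σ)(Δ(a) ⊗ 1)`, viewed in `A ⊗ (A ⊗ A)`. -/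
def delta13 (Δ : A →ₐ[ℂ] A ⊗[ℂ] A) (a : A) : A ⊗[ℂ] (A ⊗[ℂ] A) :=
  TensorProduct.map LinearMap.id (TensorProduct.comm ℂ A A).toLinearMap
    (TensorProduct.assoc ℂ A A A (Δ a ⊗ₜ[ℂ] (1 : A)))

set_option maxHeartbeats 1000000
set_option synthInstance.maxHeartbeats 400000

section LSAux

variable {A : Type*} [Ring A] [Algebra ℂ A]

lemma sliceR_tmul (ω : A →ₗ[ℂ] ℂ) (x y : A) : sliceR ω (x ⊗ₜ[ℂ] y) = ω y • x := by
  simp [sliceR]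

lemma sliceL_tmul (ω : A →ₗ[ℂ] ℂ) (x y : A) : sliceL ω (x ⊗ₜ[ℂ] y) = ω x • y := by
  simp [sliceL]

lemma T1_tmul (Δ : A →ₐ[ℂ] A ⊗[ℂ] A) (a b : A) :
    T1 Δ (a ⊗ₜ[ℂ] b) = Δ a * ((1 : A) ⊗ₜ[ℂ] b) := by
  simp [T1, LinearMap.mul'_apply]

lemma T2_tmul (Δ : A →ₐ[ℂ] A ⊗[ℂ] A) (a b : A) :
    T2 Δ (a ⊗ₜ[ℂ] b) = (a ⊗ₜ[ℂ] (1 : A)) * Δ b := by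
  simp [T2, LinearMap.mul'_apply]

lemma sliceL_mul_one_tmul (ω : A →ₗ[ℂ] ℂ) (u : A ⊗[ℂ] A) (b : A) :
    sliceL ω (u * ((1 : A) ⊗ₜ[ℂ] b)) = sliceL ω u * b := by
  induction u using TensorProduct.induction_on with
  | zero => simp
  | tmul x y => simp [Algebra.TensorProduct.tmul_mul_tmul, sliceL_tmul, smul_mul_assoc]
  | add u v hu hv => rw [add_mul, map_add, hu, hv, map_add, add_mul]

/-- generic left-multiplication compatibility for maps of shape `mul' ∘ map (mk.flip 1) ν`. -/
lemma Mleft (ν : A →ₗ[ℂ] A ⊗[ℂ] A) (x : A) (u : A ⊗[ℂ] A) :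
    (LinearMap.mul' ℂ (A ⊗[ℂ] A) ∘ₗ
      TensorProduct.map ((TensorProduct.mk ℂ A A).flip 1) ν) ((x ⊗ₜ[ℂ] (1 : A)) * u) =
    (x ⊗ₜ[ℂ] (1 : A)) *
      ((LinearMap.mul' ℂ (A ⊗[ℂ] A) ∘ₗ
        TensorProduct.map ((TensorProduct.mk ℂ A A).flip 1) ν) u) := by
  induction u using TensorProduct.induction_on with
  | zero => simp
  | tmul c d =>
      simp only [Algebra.TensorProduct.tmul_mul_tmul, one_mul, LinearMap.comp_apply,
        TensorProduct.map_tmul, LinearMap.mul'_apply, TensorProduct.mk_apply,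
        LinearMap.flip_apply]
      rw [← mul_assoc, Algebra.TensorProduct.tmul_mul_tmul, one_mul]
  | add u v hu hv => rw [mul_add, map_add, hu, hv, map_add, mul_add]

end LSAux
/-- Finite-dimensional Larson-Sweedler theorem (cointegral version): if `A` is
finite-dimensional and there is a faithful left cointegral, then `T₁` and `T₂` are bijective
and `(A, Δ)` is a Hopf algebra. -/
theorem larson_sweedler_finite_dimensional_cointegral
    [FiniteDimensional ℂ A]
    (Δ : A →ₐ[ℂ] A ⊗[ℂ] A) (hΔ : IsCoassoc Δ)
    (h : A) (hh : IsLeftCointegral Δ h)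
    (hhf : leftLegOf (Δ h) = ⊤ ∧ rightLegOf (Δ h) = ⊤) :
    (Function.Bijective (T1 Δ) ∧ Function.Bijective (T2 Δ)) ∧
    ∃ (ε : A →ₗ[ℂ] ℂ) (S : A →ₗ[ℂ] A), ∀ a : A,
      sliceL ε (Δ a) = a ∧ sliceR ε (Δ a) = a ∧
      LinearMap.mul' ℂ A (TensorProduct.map S LinearMap.id (Δ a)) = ε a • (1 : A) ∧
      LinearMap.mul' ℂ A (TensorProduct.map LinearMap.id S (Δ a)) = ε a • (1 : A) := by
  obtain ⟨hne, hco⟩ := hh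
  -- (E1) : slicing the cointegral identity
  have E1 : ∀ (ω : A →ₗ[ℂ] ℂ) (a : A), sliceL ω (Δ a) * h = ω a • h := by
    intro ω a
    rw [← sliceL_mul_one_tmul, hco a, sliceL_tmul]
  -- every b satisfies b * h ∈ ℂ • h
  have hmem : ∀ b : A, b * h ∈ Submodule.span ℂ {h} := by
    intro b
    have hb : b ∈ rightLegOf (Δ h) := hhf.2 ▸ Submodule.mem_top
    refine Submodule.span_induction (p := fun x _ => x * h ∈ Submodule.span ℂ {h})
      ?_ ?_ ?_ ?_ hb
    · rintro x ⟨ω, rfl⟩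
      rw [E1 ω h]
      exact Submodule.smul_mem _ _ (Submodule.mem_span_singleton_self h)
    · show (0:A) * h ∈ Submodule.span ℂ {h}; rw [zero_mul]; exact Submodule.zero_mem _
    · intro x y _ _ hx hy; rw [add_mul]; exact Submodule.add_mem _ hx hy
    · intro c x _ hx; rw [smul_mul_assoc]; exact Submodule.smul_mem _ _ hx
  -- the counit as a linear functional
  obtain ⟨ε, hε⟩ : ∃ ε : A →ₗ[ℂ] ℂ, ∀ b : A, b * h = ε b • h := by
    have hex : ∀ b : A, ∃ c : ℂ, c • h = b * h := fun b =>
      Submodule.mem_span_singleton.mp (hmem b)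
    choose c hc using hex
    refine ⟨⟨⟨c, ?_⟩, ?_⟩, fun b => (hc b).symm⟩
    · intro b₁ b₂
      apply smul_left_injective ℂ hne
      dsimp only
      rw [hc, add_smul, hc, hc, add_mul]
    · intro r b
      apply smul_left_injective ℂ hne
      dsimp only
      rw [hc, RingHom.id_apply, smul_mul_assoc, ← hc, smul_smul, smul_eq_mul]
  -- a functional detecting h
  obtain ⟨φ, hφ1⟩ : ∃ φ : A →ₗ[ℂ] ℂ, φ h = 1 := by
    have h1 : ¬ ∀ ψ : Module.Dual ℂ A, ψ h = 0 := by
      rw [Module.forall_dual_apply_eq_zero_iff]; exact hne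
    push_neg at h1
    obtain ⟨ψ, hψ⟩ := h1
    exact ⟨(ψ h)⁻¹ • ψ, by simp [inv_mul_cancel₀ hψ]⟩
  -- right counit property
  have hRC : ∀ a : A, sliceR ε (Δ a) = a := by
    intro a
    have key : ∀ u : A ⊗[ℂ] A, u * ((1 : A) ⊗ₜ[ℂ] h) = (sliceR ε u) ⊗ₜ[ℂ] h := by
      intro u
      induction u using TensorProduct.induction_on with
      | zero => simp
      | tmul x y =>
          rw [Algebra.TensorProduct.tmul_mul_tmul, mul_one, hε y, tmul_smul, sliceR_tmul,
            smul_tmul']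
      | add u v hu hv => rw [add_mul, hu, hv, map_add, add_tmul]
    have e2 := key (Δ a)
    rw [hco a] at e2
    have e3 := congrArg (sliceR φ) e2
    rw [sliceR_tmul, sliceR_tmul, hφ1, one_smul, one_smul] at e3
    exact e3.symm
  -- left counit property
  have hLC : ∀ b : A, sliceL ε (Δ b) = b := by
    have inner1 : ∀ (t : A ⊗[ℂ] A) (y : A),
        TensorProduct.map LinearMap.id (sliceL ε)
          (TensorProduct.assoc ℂ A A A (t ⊗ₜ[ℂ] y)) = (sliceR ε t) ⊗ₜ[ℂ] y := by
      intro t y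
      induction t using TensorProduct.induction_on with
      | zero => simp
      | tmul p q =>
          rw [TensorProduct.assoc_tmul, TensorProduct.map_tmul, LinearMap.id_apply,
            sliceL_tmul, tmul_smul, sliceR_tmul, smul_tmul']
      | add t s ht hs => rw [add_tmul, map_add, map_add, ht, hs, map_add, add_tmul]
    have fix1 : ∀ u : A ⊗[ℂ] A,
        TensorProduct.map LinearMap.id (sliceL ε)
          (TensorProduct.assoc ℂ A A A
            (TensorProduct.map Δ.toLinearMap LinearMap.id u)) = u := by
      intro u
      induction u using TensorProduct.induction_on with
      | zero => simp
      | tmul x y =>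
          rw [TensorProduct.map_tmul, LinearMap.id_apply, AlgHom.toLinearMap_apply, inner1,
            hRC]
      | add u v hu hv => rw [map_add, map_add, map_add, hu, hv]
    have hsplit : TensorProduct.map (LinearMap.id : A →ₗ[ℂ] A) (sliceL ε ∘ₗ Δ.toLinearMap)
        = TensorProduct.map LinearMap.id (sliceL ε) ∘ₗ
          TensorProduct.map LinearMap.id Δ.toLinearMap := by
      apply TensorProduct.ext'
      intro x y
      simp
    have step : TensorProduct.map LinearMap.id (sliceL ε ∘ₗ Δ.toLinearMap) (Δ h) = Δ h := by
      rw [hsplit, LinearMap.comp_apply, ← hΔ h, fix1]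
    have commute : ∀ (ω : A →ₗ[ℂ] ℂ) (u : A ⊗[ℂ] A),
        sliceL ω (TensorProduct.map LinearMap.id (sliceL ε ∘ₗ Δ.toLinearMap) u)
          = sliceL ε (Δ (sliceL ω u)) := by
      intro ω u
      induction u using TensorProduct.induction_on with
      | zero => simp
      | tmul x y =>
          simp [sliceL_tmul, map_smul]
      | add u v hu hv => simp only [map_add, hu, hv]
    intro b
    have hb : b ∈ rightLegOf (Δ h) := hhf.2 ▸ Submodule.mem_top
    refine Submodule.span_induction (p := fun x _ => sliceL ε (Δ x) = x) ?_ ?_ ?_ ?_ hb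
    · rintro x ⟨ω, rfl⟩
      have e4 := commute ω (Δ h)
      rw [step] at e4
      exact e4.symm
    · show sliceL ε (Δ (0:A)) = (0:A); rw [map_zero, map_zero]
    · intro x y _ _ hx hy; rw [map_add, map_add, hx, hy]
    · intro r x _ hx; rw [map_smul, map_smul, hx]
    -- T1 is surjective
  have hT1surj : Function.Surjective (T1 Δ) := by
    have hrange : ∀ u : A ⊗[ℂ] A, u ∈ LinearMap.range (T1 Δ) := by
      intro u
      induction u using TensorProduct.induction_on with
      | zero => exact Submodule.zero_mem _
      | add u v hu hv => exact Submodule.add_mem _ hu hv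
      | tmul a b =>
        have hb : b ∈ leftLegOf (Δ h) := hhf.1 ▸ Submodule.mem_top
        refine Submodule.span_induction
          (p := fun x _ => a ⊗ₜ[ℂ] x ∈ LinearMap.range (T1 Δ)) ?_ ?_ ?_ ?_ hb
        · rintro x ⟨ω, rfl⟩
          -- the key computation
          set cL : A →ₗ[ℂ] A :=
            sliceR ω ∘ₗ LinearMap.mulRight ℂ (Δ h) ∘ₗ TensorProduct.mk ℂ A A 1 with hcL
          have hcLapp : ∀ z : A, cL z = sliceR ω (((1 : A) ⊗ₜ[ℂ] z) * Δ h) := fun z => rfl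
          -- (SL) : slice of a product
          have SL : ∀ (y z : A) (t : A ⊗[ℂ] A),
              sliceR ω ((y ⊗ₜ[ℂ] z) * t) = y * sliceR ω (((1 : A) ⊗ₜ[ℂ] z) * t) := by
            intro y z t
            induction t using TensorProduct.induction_on with
            | zero => simp
            | tmul c d =>
                rw [Algebra.TensorProduct.tmul_mul_tmul, Algebra.TensorProduct.tmul_mul_tmul,
                  one_mul, sliceR_tmul, sliceR_tmul, mul_smul_comm]
            | add t s ht hs => rw [mul_add, map_add, ht, hs, mul_add, map_add, mul_add]
          -- the auxiliary map F
          set F : (A ⊗[ℂ] A) ⊗[ℂ] A →ₗ[ℂ] A ⊗[ℂ] A :=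
            TensorProduct.map LinearMap.id (LinearMap.mul' ℂ A ∘ₗ
              TensorProduct.map LinearMap.id cL) ∘ₗ
              (TensorProduct.assoc ℂ A A A).toLinearMap with hF
          have hFapp : ∀ (x y z : A), F ((x ⊗ₜ[ℂ] y) ⊗ₜ[ℂ] z) = x ⊗ₜ[ℂ] (y * cL z) := by
            intro x y z
            rw [hF]
            simp [LinearMap.mul'_apply]
          -- ★1
          have star1 : ∀ s : (A ⊗[ℂ] A) ⊗[ℂ] A,
              TensorProduct.map LinearMap.id (sliceR ω)
                ((TensorProduct.assoc ℂ A A A s) * ((1 : A) ⊗ₜ[ℂ] Δ h)) = F s := by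
            intro s
            induction s using TensorProduct.induction_on with
            | zero => rw [map_zero, zero_mul, map_zero, map_zero]
            | add s t hs ht => rw [map_add, add_mul, map_add, hs, ht, map_add]
            | tmul t z =>
                induction t using TensorProduct.induction_on with
                | zero => rw [zero_tmul, map_zero, zero_mul, map_zero, map_zero]
                | add t s ht hs =>
                    rw [add_tmul, map_add, add_mul, map_add, ht, hs, map_add]
                | tmul x y =>
                    rw [TensorProduct.assoc_tmul, hFapp,
                      Algebra.TensorProduct.tmul_mul_tmul, mul_one,
                      TensorProduct.map_tmul, LinearMap.id_apply, SL, hcLapp]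
          -- ★2
          have star2 : ∀ v : A ⊗[ℂ] A,
              F (TensorProduct.map Δ.toLinearMap LinearMap.id v)
                = T1 Δ (TensorProduct.map LinearMap.id cL v) := by
            have SL2 : ∀ (t : A ⊗[ℂ] A) (y : A),
                F (t ⊗ₜ[ℂ] y) = t * ((1 : A) ⊗ₜ[ℂ] (cL y)) := by
              intro t y
              induction t using TensorProduct.induction_on with
              | zero => rw [zero_tmul, map_zero, zero_mul]
              | add t s ht hs => rw [add_tmul, map_add, ht, hs, add_mul]
              | tmul p q =>
                  rw [hFapp, Algebra.TensorProduct.tmul_mul_tmul, mul_one]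
            intro v
            induction v using TensorProduct.induction_on with
            | zero => rw [map_zero, map_zero, map_zero, map_zero]
            | add v w hv hw => rw [map_add, map_add, hv, hw, map_add, map_add]
            | tmul x y =>
                rw [TensorProduct.map_tmul, TensorProduct.map_tmul, LinearMap.id_apply,
                  LinearMap.id_apply, AlgHom.toLinearMap_apply, SL2, T1_tmul]
          -- (**) : the cointegral identity after id ⊗ Δ
          have starstar : (TensorProduct.map LinearMap.id Δ.toLinearMap (Δ a))
              * ((1 : A) ⊗ₜ[ℂ] Δ h) = a ⊗ₜ[ℂ] Δ h := by
            have gen : ∀ u : A ⊗[ℂ] A,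
                (TensorProduct.map LinearMap.id Δ.toLinearMap u) * ((1 : A) ⊗ₜ[ℂ] Δ h)
                  = TensorProduct.map LinearMap.id Δ.toLinearMap (u * ((1 : A) ⊗ₜ[ℂ] h)) := by
              intro u
              induction u using TensorProduct.induction_on with
              | zero => rw [map_zero, zero_mul, zero_mul, map_zero]
              | add u v hu hv => rw [map_add, add_mul, hu, hv, add_mul, map_add]
              | tmul x y =>
                  simp only [TensorProduct.map_tmul, LinearMap.id_apply,
                    AlgHom.toLinearMap_apply, Algebra.TensorProduct.tmul_mul_tmul,
                    mul_one, map_mul]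
            rw [gen, hco a, TensorProduct.map_tmul, LinearMap.id_apply,
              AlgHom.toLinearMap_apply]
          refine ⟨TensorProduct.map LinearMap.id cL (Δ a), ?_⟩
          calc T1 Δ (TensorProduct.map LinearMap.id cL (Δ a))
              = F (TensorProduct.map Δ.toLinearMap LinearMap.id (Δ a)) := (star2 (Δ a)).symm
            _ = TensorProduct.map LinearMap.id (sliceR ω)
                  ((TensorProduct.assoc ℂ A A A
                    (TensorProduct.map Δ.toLinearMap LinearMap.id (Δ a)))
                    * ((1 : A) ⊗ₜ[ℂ] Δ h)) := (star1 _).symm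
            _ = TensorProduct.map LinearMap.id (sliceR ω)
                  ((TensorProduct.map LinearMap.id Δ.toLinearMap (Δ a))
                    * ((1 : A) ⊗ₜ[ℂ] Δ h)) := by rw [hΔ a]
            _ = TensorProduct.map LinearMap.id (sliceR ω) (a ⊗ₜ[ℂ] Δ h) := by rw [starstar]
            _ = a ⊗ₜ[ℂ] sliceR ω (Δ h) := by
                rw [TensorProduct.map_tmul, LinearMap.id_apply]
        · show a ⊗ₜ[ℂ] (0:A) ∈ LinearMap.range (T1 Δ)
          rw [TensorProduct.tmul_zero]
          exact Submodule.zero_mem _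
        · intro x y _ _ hx hy
          show a ⊗ₜ[ℂ] (x + y) ∈ LinearMap.range (T1 Δ)
          rw [TensorProduct.tmul_add]
          exact Submodule.add_mem _ hx hy
        · intro r x _ hx
          show a ⊗ₜ[ℂ] (r • x) ∈ LinearMap.range (T1 Δ)
          rw [TensorProduct.tmul_smul]
          exact Submodule.smul_mem _ _ hx
    intro u
    obtain ⟨v, hv⟩ := hrange u
    exact ⟨v, hv⟩
  have bij1 : Function.Bijective (T1 Δ) :=
    ⟨LinearMap.injective_iff_surjective.mpr hT1surj, hT1surj⟩
    -- the inverse of T1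
  set e : (A ⊗[ℂ] A) ≃ₗ[ℂ] A ⊗[ℂ] A := LinearEquiv.ofBijective (T1 Δ) bij1 with he0
  have he : ∀ u : A ⊗[ℂ] A, e u = T1 Δ u := fun _ => rfl
  -- T1 is right A-linear
  have t1r : ∀ (u : A ⊗[ℂ] A) (y : A),
      T1 Δ (u * ((1 : A) ⊗ₜ[ℂ] y)) = T1 Δ u * ((1 : A) ⊗ₜ[ℂ] y) := by
    intro u y
    induction u using TensorProduct.induction_on with
    | zero => simp
    | add u v hu hv => rw [add_mul, map_add, hu, hv, map_add, add_mul]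
    | tmul x z =>
        rw [Algebra.TensorProduct.tmul_mul_tmul, mul_one, T1_tmul, T1_tmul, mul_assoc,
          Algebra.TensorProduct.tmul_mul_tmul, one_mul]
  -- hence so is its inverse
  have gr : ∀ (u : A ⊗[ℂ] A) (y : A),
      e.symm (u * ((1 : A) ⊗ₜ[ℂ] y)) = e.symm u * ((1 : A) ⊗ₜ[ℂ] y) := by
    intro u y
    apply e.injective
    rw [e.apply_symm_apply, he, t1r, ← he, e.apply_symm_apply]
  -- the antipode
  set S : A →ₗ[ℂ] A :=
    sliceL ε ∘ₗ e.symm.toLinearMap ∘ₗ (TensorProduct.mk ℂ A A).flip 1 with hS0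
  have hSapp : ∀ a : A, S a = sliceL ε (e.symm (a ⊗ₜ[ℂ] (1 : A))) := fun _ => rfl
  -- antipode identity (left)
  have A1 : ∀ (x y : A), S x * y = sliceL ε (e.symm (x ⊗ₜ[ℂ] y)) := by
    intro x y
    have : x ⊗ₜ[ℂ] y = (x ⊗ₜ[ℂ] (1 : A)) * ((1 : A) ⊗ₜ[ℂ] y) := by
      rw [Algebra.TensorProduct.tmul_mul_tmul, mul_one, one_mul]
    rw [this, gr, sliceL_mul_one_tmul, hSapp]
  have antipode1 : ∀ a : A,
      LinearMap.mul' ℂ A (TensorProduct.map S LinearMap.id (Δ a)) = ε a • (1 : A) := by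
    have expand : ∀ u : A ⊗[ℂ] A,
        LinearMap.mul' ℂ A (TensorProduct.map S LinearMap.id u) = sliceL ε (e.symm u) := by
      intro u
      induction u using TensorProduct.induction_on with
      | zero => simp
      | add u v hu hv => rw [map_add, map_add, hu, hv, map_add, map_add]
      | tmul x y =>
          rw [TensorProduct.map_tmul, LinearMap.id_apply, LinearMap.mul'_apply, A1]
    intro a
    have hTa : e (a ⊗ₜ[ℂ] (1 : A)) = Δ a := by
      rw [he, T1_tmul, ← Algebra.TensorProduct.one_def, mul_one]
    rw [expand (Δ a), ← hTa, e.symm_apply_apply, sliceL_tmul]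
  -- the convolution algebra trick for the right antipode identity
  set conv : (A →ₗ[ℂ] A) → (A →ₗ[ℂ] A) → (A →ₗ[ℂ] A) :=
    fun f g => LinearMap.mul' ℂ A ∘ₗ TensorProduct.map f g ∘ₗ Δ.toLinearMap with hconv
  have hconvapp : ∀ (f g : A →ₗ[ℂ] A) (a : A),
      conv f g a = LinearMap.mul' ℂ A (TensorProduct.map f g (Δ a)) := fun _ _ _ => rfl
  set u₀ : A →ₗ[ℂ] A := LinearMap.toSpanSingleton ℂ A 1 ∘ₗ ε with hu₀0
  have hu₀ : ∀ a : A, u₀ a = ε a • (1 : A) := fun _ => rfl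
  -- associativity of convolution
  have conv_assoc : ∀ f g k : A →ₗ[ℂ] A, conv (conv f g) k = conv f (conv g k) := by
    intro f g k
    have key : ∀ w : A ⊗[ℂ] (A ⊗[ℂ] A),
        LinearMap.mul' ℂ A
          (TensorProduct.map (LinearMap.mul' ℂ A ∘ₗ TensorProduct.map f g) k
            ((TensorProduct.assoc ℂ A A A).symm w))
        = LinearMap.mul' ℂ A
            (TensorProduct.map f (LinearMap.mul' ℂ A ∘ₗ TensorProduct.map g k) w) := by
      intro w
      induction w using TensorProduct.induction_on with
      | zero => simp
      | add w v hw hv => simp only [map_add, hw, hv]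
      | tmul x t =>
          induction t using TensorProduct.induction_on with
          | zero => simp
          | add t s ht hs => simp only [TensorProduct.tmul_add, map_add, ht, hs]
          | tmul y z =>
              simp only [TensorProduct.assoc_symm_tmul, TensorProduct.map_tmul,
                LinearMap.coe_comp, Function.comp_apply, LinearMap.mul'_apply, mul_assoc]
    apply LinearMap.ext
    intro a
    have split1 : TensorProduct.map (conv f g) k
        = TensorProduct.map (LinearMap.mul' ℂ A ∘ₗ TensorProduct.map f g) k ∘ₗ
          TensorProduct.map Δ.toLinearMap LinearMap.id := by
      apply TensorProduct.ext'
      intro x y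
      simp [hconv]
    have split2 : TensorProduct.map f (conv g k)
        = TensorProduct.map f (LinearMap.mul' ℂ A ∘ₗ TensorProduct.map g k) ∘ₗ
          TensorProduct.map LinearMap.id Δ.toLinearMap := by
      apply TensorProduct.ext'
      intro x y
      simp [hconv]
    have hC1 : TensorProduct.map Δ.toLinearMap LinearMap.id (Δ a)
        = (TensorProduct.assoc ℂ A A A).symm
            (TensorProduct.map LinearMap.id Δ.toLinearMap (Δ a)) := by
      rw [← hΔ a, LinearEquiv.symm_apply_apply]
    rw [hconvapp, hconvapp, split1, split2, LinearMap.comp_apply, LinearMap.comp_apply,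
      hC1, key]
  -- unit laws
  have conv_unit_left : ∀ f : A →ₗ[ℂ] A, conv u₀ f = f := by
    intro f
    apply LinearMap.ext
    intro a
    have key : ∀ u : A ⊗[ℂ] A,
        LinearMap.mul' ℂ A (TensorProduct.map u₀ f u) = f (sliceL ε u) := by
      intro u
      induction u using TensorProduct.induction_on with
      | zero => simp
      | add u v hu hv => rw [map_add, map_add, hu, hv, map_add, map_add]
      | tmul x y =>
          rw [TensorProduct.map_tmul, LinearMap.mul'_apply, hu₀, sliceL_tmul, map_smul,
            smul_mul_assoc, one_mul]
    rw [hconvapp, key, hLC]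
  have conv_unit_right : ∀ f : A →ₗ[ℂ] A, conv f u₀ = f := by
    intro f
    apply LinearMap.ext
    intro a
    have key : ∀ u : A ⊗[ℂ] A,
        LinearMap.mul' ℂ A (TensorProduct.map f u₀ u) = f (sliceR ε u) := by
      intro u
      induction u using TensorProduct.induction_on with
      | zero => simp
      | add u v hu hv => rw [map_add, map_add, hu, hv, map_add, map_add]
      | tmul x y =>
          rw [TensorProduct.map_tmul, LinearMap.mul'_apply, hu₀, sliceR_tmul, map_smul,
            mul_smul_comm, mul_one]
    rw [hconvapp, key, hRC]
  have hconvS : conv S LinearMap.id = u₀ := by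
    apply LinearMap.ext
    intro a
    rw [hconvapp, antipode1, hu₀]
  -- convolution operators
  have convlin : ∀ f : A →ₗ[ℂ] A, ∃ Cf : Module.End ℂ (A →ₗ[ℂ] A),
      ∀ g, Cf g = conv f g := by
    intro f
    refine ⟨⟨⟨fun g => conv f g, ?_⟩, ?_⟩, fun g => rfl⟩
    · intro g₁ g₂
      rw [hconv]
      dsimp only
      rw [TensorProduct.map_add_right, LinearMap.add_comp, LinearMap.comp_add]
    · intro r g
      dsimp only
      rw [hconv]
      dsimp only
      rw [TensorProduct.map_smul_right, RingHom.id_apply, LinearMap.smul_comp,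
        LinearMap.comp_smul]
  obtain ⟨CS, hCS⟩ := convlin S
  obtain ⟨Cid, hCid⟩ := convlin LinearMap.id
  have comp1 : CS * Cid = 1 := by
    apply LinearMap.ext
    intro g
    rw [Module.End.mul_apply, hCS, hCid, ← conv_assoc, hconvS, conv_unit_left,
      Module.End.one_apply]
  have comp2 : Cid * CS = 1 := mul_eq_one_comm.mp comp1
  have hidS : conv LinearMap.id S = u₀ := by
    have e5 := LinearMap.ext_iff.mp comp2 u₀
    rw [Module.End.mul_apply, hCS, conv_unit_right, hCid, Module.End.one_apply] at e5
    exact e5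
  have antipode2 : ∀ a : A,
      LinearMap.mul' ℂ A (TensorProduct.map LinearMap.id S (Δ a)) = ε a • (1 : A) := by
    intro a
    have e6 := LinearMap.ext_iff.mp hidS a
    rw [hconvapp, hu₀] at e6
    exact e6
  -- explicit inverse of T2
  set R : A ⊗[ℂ] A →ₗ[ℂ] A ⊗[ℂ] A :=
    LinearMap.mul' ℂ (A ⊗[ℂ] A) ∘ₗ
      TensorProduct.map ((TensorProduct.mk ℂ A A).flip 1)
        (TensorProduct.map S LinearMap.id ∘ₗ Δ.toLinearMap) with hR0
  have hRapp : ∀ (c d : A),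
      R (c ⊗ₜ[ℂ] d) = (c ⊗ₜ[ℂ] (1 : A)) * (TensorProduct.map S LinearMap.id (Δ d)) := by
    intro c d
    rw [hR0]
    simp [LinearMap.mul'_apply]
  have hM2 : ∀ (x : A) (u : A ⊗[ℂ] A),
      T2 Δ ((x ⊗ₜ[ℂ] (1 : A)) * u) = (x ⊗ₜ[ℂ] (1 : A)) * T2 Δ u := fun x u =>
    Mleft Δ.toLinearMap x u
  have hMR : ∀ (x : A) (u : A ⊗[ℂ] A),
      R ((x ⊗ₜ[ℂ] (1 : A)) * u) = (x ⊗ₜ[ℂ] (1 : A)) * R u := fun x u =>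
    Mleft (TensorProduct.map S LinearMap.id ∘ₗ Δ.toLinearMap) x u
  set Q : A ⊗[ℂ] (A ⊗[ℂ] A) →ₗ[ℂ] A ⊗[ℂ] A :=
    LinearMap.mul' ℂ (A ⊗[ℂ] A) ∘ₗ
      TensorProduct.map (((TensorProduct.mk ℂ A A).flip 1) ∘ₗ S) LinearMap.id with hQ0
  have hQapp : ∀ (x : A) (w : A ⊗[ℂ] A), Q (x ⊗ₜ[ℂ] w) = ((S x) ⊗ₜ[ℂ] (1 : A)) * w := by
    intro x w
    rw [hQ0]
    simp [LinearMap.mul'_apply]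
  set Q2 : A ⊗[ℂ] (A ⊗[ℂ] A) →ₗ[ℂ] A ⊗[ℂ] A :=
    LinearMap.mul' ℂ (A ⊗[ℂ] A) ∘ₗ
      TensorProduct.map ((TensorProduct.mk ℂ A A).flip 1)
        (TensorProduct.map S LinearMap.id) with hQ20
  have hQ2app : ∀ (x : A) (w : A ⊗[ℂ] A),
      Q2 (x ⊗ₜ[ℂ] w) = (x ⊗ₜ[ℂ] (1 : A)) * (TensorProduct.map S LinearMap.id w) := by
    intro x w
    rw [hQ20]
    simp [LinearMap.mul'_apply]
  have exp3 : ∀ w : A ⊗[ℂ] A,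
      TensorProduct.map u₀ LinearMap.id w = (1 : A) ⊗ₜ[ℂ] sliceL ε w := by
    intro w
    induction w using TensorProduct.induction_on with
    | zero => simp
    | add w v hw hv => rw [map_add, hw, hv, map_add, TensorProduct.tmul_add]
    | tmul x y =>
        rw [TensorProduct.map_tmul, LinearMap.id_apply, hu₀, sliceL_tmul,
          TensorProduct.smul_tmul]
  have exp1 : ∀ u : A ⊗[ℂ] A,
      T2 Δ (TensorProduct.map S LinearMap.id u)
        = Q (TensorProduct.map LinearMap.id Δ.toLinearMap u) := by
    intro u
    induction u using TensorProduct.induction_on with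
    | zero => rw [map_zero, map_zero, map_zero, map_zero]
    | add u v hu hv => rw [map_add, map_add, hu, hv, map_add, map_add]
    | tmul x y =>
        rw [TensorProduct.map_tmul, TensorProduct.map_tmul, LinearMap.id_apply,
          LinearMap.id_apply, AlgHom.toLinearMap_apply, T2_tmul, hQapp]
  have inner2 : ∀ (t : A ⊗[ℂ] A) (d : A),
      Q (TensorProduct.assoc ℂ A A A (t ⊗ₜ[ℂ] d))
        = (LinearMap.mul' ℂ A (TensorProduct.map S LinearMap.id t)) ⊗ₜ[ℂ] d := by
    intro t d
    induction t using TensorProduct.induction_on with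
    | zero => simp
    | add t s ht hs =>
        rw [TensorProduct.add_tmul, map_add, map_add, ht, hs, map_add, map_add,
          TensorProduct.add_tmul]
    | tmul p q =>
        rw [TensorProduct.assoc_tmul, hQapp, TensorProduct.map_tmul, LinearMap.id_apply,
          LinearMap.mul'_apply, Algebra.TensorProduct.tmul_mul_tmul, one_mul]
  have exp2 : ∀ w : A ⊗[ℂ] A,
      Q (TensorProduct.assoc ℂ A A A (TensorProduct.map Δ.toLinearMap LinearMap.id w))
        = TensorProduct.map u₀ LinearMap.id w := by
    intro w
    induction w using TensorProduct.induction_on with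
    | zero => simp
    | add w v hw hv => rw [map_add, map_add, map_add, hw, hv, map_add]
    | tmul c d =>
        rw [TensorProduct.map_tmul, LinearMap.id_apply, AlgHom.toLinearMap_apply, inner2,
          antipode1, TensorProduct.map_tmul, LinearMap.id_apply, hu₀]
  have K1 : ∀ b : A,
      T2 Δ (TensorProduct.map S LinearMap.id (Δ b)) = (1 : A) ⊗ₜ[ℂ] b := by
    intro b
    rw [exp1, ← hΔ b, exp2, exp3, hLC]
  have exp1' : ∀ u : A ⊗[ℂ] A,
      R u = Q2 (TensorProduct.map LinearMap.id Δ.toLinearMap u) := by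
    intro u
    induction u using TensorProduct.induction_on with
    | zero => rw [map_zero, map_zero, map_zero]
    | add u v hu hv => rw [map_add, hu, hv, map_add, map_add]
    | tmul c d =>
        rw [hRapp, TensorProduct.map_tmul, LinearMap.id_apply, AlgHom.toLinearMap_apply,
          hQ2app]
  have inner2' : ∀ (t : A ⊗[ℂ] A) (d : A),
      Q2 (TensorProduct.assoc ℂ A A A (t ⊗ₜ[ℂ] d))
        = (LinearMap.mul' ℂ A (TensorProduct.map LinearMap.id S t)) ⊗ₜ[ℂ] d := by
    intro t d
    induction t using TensorProduct.induction_on with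
    | zero => simp
    | add t s ht hs =>
        rw [TensorProduct.add_tmul, map_add, map_add, ht, hs, map_add, map_add,
          TensorProduct.add_tmul]
    | tmul p q =>
        rw [TensorProduct.assoc_tmul, hQ2app, TensorProduct.map_tmul, LinearMap.id_apply,
          TensorProduct.map_tmul, LinearMap.id_apply, LinearMap.mul'_apply,
          Algebra.TensorProduct.tmul_mul_tmul, one_mul]
  have exp2' : ∀ w : A ⊗[ℂ] A,
      Q2 (TensorProduct.assoc ℂ A A A (TensorProduct.map Δ.toLinearMap LinearMap.id w))
        = TensorProduct.map u₀ LinearMap.id w := by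
    intro w
    induction w using TensorProduct.induction_on with
    | zero => simp
    | add w v hw hv => rw [map_add, map_add, map_add, hw, hv, map_add]
    | tmul c d =>
        rw [TensorProduct.map_tmul, LinearMap.id_apply, AlgHom.toLinearMap_apply, inner2',
          antipode2, TensorProduct.map_tmul, LinearMap.id_apply, hu₀]
  have K2 : ∀ b : A, R (Δ b) = (1 : A) ⊗ₜ[ℂ] b := by
    intro b
    rw [exp1', ← hΔ b, exp2', exp3, hLC]
  have hleft : ∀ u : A ⊗[ℂ] A, R (T2 Δ u) = u := by
    intro u
    induction u using TensorProduct.induction_on with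
    | zero => rw [map_zero, map_zero]
    | add u v hu hv => rw [map_add, map_add, hu, hv]
    | tmul a b =>
        rw [T2_tmul, hMR, K2, Algebra.TensorProduct.tmul_mul_tmul, mul_one, one_mul]
  have hright : ∀ u : A ⊗[ℂ] A, T2 Δ (R u) = u := by
    intro u
    induction u using TensorProduct.induction_on with
    | zero => rw [map_zero, map_zero]
    | add u v hu hv => rw [map_add, map_add, hu, hv]
    | tmul a b =>
        rw [hRapp, hM2, K1, Algebra.TensorProduct.tmul_mul_tmul, mul_one, one_mul]
  have bij2 : Function.Bijective (T2 Δ) := by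
    constructor
    · exact Function.LeftInverse.injective hleft
    · exact Function.RightInverse.surjective hright
  exact ⟨⟨bij1, bij2⟩, ε, S, fun a => ⟨hLC a, hRC a, antipode1 a, antipode2 a⟩⟩
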